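/- arXiv:math/0612038 — 2 statements merged into one kernel-verified Lean document; each statement's English description precedes it below -/
import Mathlib

section
/- Let m₁ : X^ℝ → C(W₁,ℝ) and m₂ : X^ℝ → C(W₂,ℝ) be minimal sequence measure functions on compact Hausdorff spaces W₁ and W₂. Then they are topologically equivalent: there exists a homeomorphism φ : W₁ → W₂ such that m₂(x)(φ(w)) = m₁(x)(w) for all x ∈ X^ℝ and all w ∈ W₁. -/
open Filter Topology

noncomputable section

/-- Frame-compatible sequence (index `n : ℕ` corresponds to the paper's `n+1`). -/
def FrameCompatible {ι : Type*} (In : ℕ → Finset ι) (x : ℕ → ℝ) : Prop :=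
  (0 ≤ x 0 ∧ x 0 ≤ ((In 0).card : ℝ)) ∧
  ∀ n : ℕ, 0 ≤ x (n + 1) - x n ∧
    x (n + 1) - x n ≤ ((In (n + 1)).card : ℝ) - ((In n).card : ℝ)

/-- `X`: the set of frame compatible sequences. -/
def Xset {ι : Type*} (In : ℕ → Finset ι) : Set (ℕ → ℝ) :=
  {x | FrameCompatible In x}

/-- `X⁺ = {c • x : x ∈ X, c ≥ 0}`. -/
def Xplus {ι : Type*} (In : ℕ → Finset ι) : Set (ℕ → ℝ) :=
  {y | ∃ c : ℝ, 0 ≤ c ∧ ∃ x ∈ Xset In, y = c • x}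

/-- `X^ℝ = {x − y : x, y ∈ X⁺}`. -/
def XR {ι : Type*} (In : ℕ → Finset ι) : Set (ℕ → ℝ) :=
  {z | ∃ x ∈ Xplus In, ∃ y ∈ Xplus In, z = x - y}

/-- `x ≈ y` : `(xₙ − yₙ)/|Iₙ| → 0`. -/
def SeqApprox {ι : Type*} (In : ℕ → Finset ι) (x y : ℕ → ℝ) : Prop :=
  Tendsto (fun n => (x n - y n) / ((In n).card : ℝ)) atTop (nhds 0)

/-- `y ⪬ x` : `liminf (xₙ − yₙ)/|Iₙ| ≥ 0`. -/
def SeqLeq {ι : Type*} (In : ℕ → Finset ι) (y x : ℕ → ℝ) : Prop :=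
  0 ≤ atTop.liminf fun n => (x n - y n) / ((In n).card : ℝ)

/-- A sequence measure function (modelled as a total map `(ℕ → ℝ) → C(W, ℝ)`,
constrained only on `X^ℝ`, its mathematical domain):
(1) for `x, y ∈ X^ℝ`, `m x = m y ↔ x ≈ y`;
(2) for `x, y ∈ X⁺`, `m x ≤ m y` pointwise iff `x ⪬ y`;
(3) `m i = 1` where `i = (|Iₙ|)ₙ`;
(4) `m` is linear (additive and homogeneous) on `X^ℝ`. -/
def IsSeqMF {ι : Type*} (In : ℕ → Finset ι) {W : Type*} [TopologicalSpace W]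
    (m : (ℕ → ℝ) → C(W, ℝ)) : Prop :=
  (∀ x ∈ XR In, ∀ y ∈ XR In, (m x = m y ↔ SeqApprox In x y)) ∧
  (∀ x ∈ Xplus In, ∀ y ∈ Xplus In, ((∀ w : W, m x w ≤ m y w) ↔ SeqLeq In x y)) ∧
  (m (fun n => ((In n).card : ℝ)) = 1) ∧
  (∀ x ∈ XR In, ∀ y ∈ XR In, m (x + y) = m x + m y) ∧
  (∀ x ∈ XR In, ∀ c : ℝ, m (c • x) = c • m x)

/-- A sequence measure function is separable if the functions `m x` separate
the points of `W`. -/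
def SMFSeparable {ι : Type*} (In : ℕ → Finset ι) {W : Type*} [TopologicalSpace W]
    (m : (ℕ → ℝ) → C(W, ℝ)) : Prop :=
  ∀ v w : W, v ≠ w → ∃ x ∈ XR In, m x v ≠ m x w

/-- A sequence measure function is reducible if its restriction to some proper compact
subset `V ⊊ W` is again a sequence measure function. -/
def SMFReducible {ι : Type*} (In : ℕ → Finset ι) {W : Type*} [TopologicalSpace W]
    (m : (ℕ → ℝ) → C(W, ℝ)) : Prop :=
  ∃ V : Set W, IsCompact V ∧ V ≠ Set.univ ∧
    IsSeqMF In (fun x => (m x).restrict V)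

/-- A sequence measure function is minimal if it is separable and irreducible. -/
def SMFMinimal {ι : Type*} (In : ℕ → Finset ι) {W : Type*} [TopologicalSpace W]
    (m : (ℕ → ℝ) → C(W, ℝ)) : Prop :=
  SMFSeparable In m ∧ ¬ SMFReducible In m

namespace SMF14

variable {ι : Type*} (In : ℕ → Finset ι)

/-- The cardinality sequence as reals. -/
def ic : ℕ → ℝ := fun n => ((In n).card : ℝ)

variable {In}

lemma ic_nonneg (n : ℕ) : 0 ≤ ic In n := Nat.cast_nonneg _

lemma ic_mono (hmono : Monotone In) {a b : ℕ} (h : a ≤ b) : ic In a ≤ ic In b := by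
  simp only [ic]
  exact_mod_cast Finset.card_le_card (hmono h)

lemma zero_mem_Xset (hmono : Monotone In) : (0 : ℕ → ℝ) ∈ Xset In := by
  refine ⟨⟨le_refl _, ic_nonneg 0⟩, fun n => ⟨by simp, ?_⟩⟩
  simp only [Pi.zero_apply, sub_zero, sub_self]
  have := ic_mono hmono (Nat.le_succ n)
  simpa [ic, sub_nonneg] using this

lemma ic_mem_Xset (hmono : Monotone In) : ic In ∈ Xset In := by
  refine ⟨⟨ic_nonneg 0, le_refl _⟩, fun n => ⟨?_, le_refl _⟩⟩
  have := ic_mono hmono (Nat.le_succ n)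
  simpa [sub_nonneg] using this

lemma Xset.bounds {x : ℕ → ℝ} (hx : x ∈ Xset In) (n : ℕ) : 0 ≤ x n ∧ x n ≤ ic In n := by
  induction n with
  | zero => exact hx.1
  | succ n ih =>
    obtain ⟨h1, h2⟩ := hx.2 n
    exact ⟨by linarith [ih.1], by
      have : ic In (n+1) - ic In n = ((In (n+1)).card : ℝ) - ((In n).card : ℝ) := rfl
      have := h2
      simp only [ic] at *
      linarith [ih.2]⟩

/-- A convenient characterization of membership in `Xplus`. -/
def XplusC (In : ℕ → Finset ι) (c : ℝ) (y : ℕ → ℝ) : Prop :=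
  0 ≤ c ∧ (0 ≤ y 0 ∧ y 0 ≤ c * ic In 0) ∧
  ∀ n, 0 ≤ y (n + 1) - y n ∧ y (n + 1) - y n ≤ c * (ic In (n + 1) - ic In n)

lemma xplusC_iff (hmono : Monotone In) {y : ℕ → ℝ} :
    y ∈ Xplus In ↔ ∃ c, XplusC In c y := by
  constructor
  · rintro ⟨c, hc, x, hx, rfl⟩
    refine ⟨c, hc, ⟨mul_nonneg hc (hx.1.1), by
      simpa [ic] using mul_le_mul_of_nonneg_left hx.1.2 hc⟩, fun n => ?_⟩
    obtain ⟨h1, h2⟩ := hx.2 n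
    constructor
    · simp only [Pi.smul_apply, smul_eq_mul, ← mul_sub]
      exact mul_nonneg hc h1
    · simp only [Pi.smul_apply, smul_eq_mul, ← mul_sub, ic]
      exact mul_le_mul_of_nonneg_left h2 hc
  · rintro ⟨c, hc, h0, hs⟩
    rcases eq_or_lt_of_le hc with h | h
    · have hy : y = 0 := by
        funext n
        induction n with
        | zero =>
          have h2 := h0.2
          rw [← h, zero_mul] at h2
          simp only [Pi.zero_apply]; linarith [h0.1]
        | succ n ih =>
          obtain ⟨h1, h2⟩ := hs n
          rw [← h, zero_mul] at h2
          simp only [Pi.zero_apply] at *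
          linarith
      exact hy ▸ ⟨0, le_refl _, 0, zero_mem_Xset hmono, by simp⟩
    · refine ⟨c, le_of_lt h, c⁻¹ • y, ⟨⟨?_, ?_⟩, fun n => ⟨?_, ?_⟩⟩, by
        funext n
        simp only [Pi.smul_apply, smul_eq_mul, ← mul_assoc,
          mul_inv_cancel₀ (ne_of_gt h), one_mul]⟩
      · exact mul_nonneg (by positivity) h0.1
      · rw [Pi.smul_apply, smul_eq_mul, inv_mul_le_iff₀ h, mul_comm]
        exact h0.2.trans_eq (mul_comm _ _)
      · have := (hs n).1
        simp only [Pi.smul_apply, smul_eq_mul, ← mul_sub]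
        positivity
      · have h2 := (hs n).2
        simp only [Pi.smul_apply, smul_eq_mul, ← mul_sub]
        rw [inv_mul_le_iff₀ h, mul_comm]
        exact h2.trans_eq (mul_comm _ _)

lemma Xplus_add (hmono : Monotone In) {y y' : ℕ → ℝ}
    (hy : y ∈ Xplus In) (hy' : y' ∈ Xplus In) : y + y' ∈ Xplus In := by
  rw [xplusC_iff hmono] at *
  obtain ⟨c, hc, h0, hs⟩ := hy
  obtain ⟨c', hc', h0', hs'⟩ := hy'
  refine ⟨c + c', add_nonneg hc hc', ⟨by simpa using add_nonneg h0.1 h0'.1, ?_⟩, fun n => ?_⟩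
  · simp only [Pi.add_apply, add_mul]; linarith [h0.2, h0'.2]
  · obtain ⟨a1, a2⟩ := hs n; obtain ⟨b1, b2⟩ := hs' n
    constructor
    · simp only [Pi.add_apply]; linarith
    · simp only [Pi.add_apply, add_mul]; linarith

lemma Xplus_smul {y : ℕ → ℝ} {t : ℝ} (ht : 0 ≤ t) (hy : y ∈ Xplus In) :
    t • y ∈ Xplus In := by
  obtain ⟨c, hc, x, hx, rfl⟩ := hy
  exact ⟨t * c, mul_nonneg ht hc, x, hx, by rw [smul_smul]⟩

lemma Xplus_zero (hmono : Monotone In) : (0 : ℕ → ℝ) ∈ Xplus In :=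
  ⟨0, le_refl _, 0, zero_mem_Xset hmono, by simp⟩

lemma Xplus_sup (hmono : Monotone In) {y y' : ℕ → ℝ}
    (hy : y ∈ Xplus In) (hy' : y' ∈ Xplus In) :
    (fun n => max (y n) (y' n)) ∈ Xplus In := by
  rw [xplusC_iff hmono] at *
  obtain ⟨c, hc, h0, hs⟩ := hy
  obtain ⟨c', hc', h0', hs'⟩ := hy'
  have hΔ : ∀ n : ℕ, 0 ≤ ic In (n + 1) - ic In n := fun n => by
    linarith [ic_mono hmono (Nat.le_succ n)]
  refine ⟨max c c', le_max_of_le_left hc, ⟨le_max_of_le_left h0.1, ?_⟩, fun n => ?_⟩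
  · apply max_le
    · exact h0.2.trans (mul_le_mul_of_nonneg_right (le_max_left _ _) (ic_nonneg 0))
    · exact h0'.2.trans (mul_le_mul_of_nonneg_right (le_max_right _ _) (ic_nonneg 0))
  · obtain ⟨a1, a2⟩ := hs n; obtain ⟨b1, b2⟩ := hs' n
    have e1 : y (n + 1) ≤ max (y n) (y' n) + max c c' * (ic In (n+1) - ic In n) := by
      have := mul_nonneg (sub_nonneg.2 (le_max_left c c')) (hΔ n)
      have := le_max_left (y n) (y' n)
      nlinarith
    have e2 : y' (n + 1) ≤ max (y n) (y' n) + max c c' * (ic In (n+1) - ic In n) := by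
      have := mul_nonneg (sub_nonneg.2 (le_max_right c c')) (hΔ n)
      have := le_max_right (y n) (y' n)
      nlinarith
    have elo1 : y n ≤ max (y (n+1)) (y' (n+1)) := le_trans (by linarith) (le_max_left _ _)
    have elo2 : y' n ≤ max (y (n+1)) (y' (n+1)) := le_trans (by linarith) (le_max_right _ _)
    constructor
    · show 0 ≤ max (y (n+1)) (y' (n+1)) - max (y n) (y' n)
      have := max_le elo1 elo2
      linarith
    · show max (y (n+1)) (y' (n+1)) - max (y n) (y' n) ≤ _
      have := max_le e1 e2
      linarith

lemma Xplus_mono_seq (hmono : Monotone In) {y : ℕ → ℝ} (hy : y ∈ Xplus In) {a b : ℕ}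
    (hab : a ≤ b) : y a ≤ y b := by
  rw [xplusC_iff hmono] at hy
  obtain ⟨c, hc, h0, hs⟩ := hy
  induction b with
  | zero => simp_all
  | succ b ih =>
    rcases Nat.lt_or_ge a (b+1) with h | h
    · have := ih (Nat.lt_succ_iff.mp h)
      linarith [(hs b).1]
    · have : a = b + 1 := le_antisymm hab h
      simp [this]

lemma Xplus_inf (hmono : Monotone In) {y y' : ℕ → ℝ}
    (hy : y ∈ Xplus In) (hy' : y' ∈ Xplus In) :
    (fun n => min (y n) (y' n)) ∈ Xplus In := by
  rw [xplusC_iff hmono] at *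
  obtain ⟨c, hc, h0, hs⟩ := hy
  obtain ⟨c', hc', h0', hs'⟩ := hy'
  have hΔ : ∀ n : ℕ, 0 ≤ ic In (n + 1) - ic In n := fun n => by
    linarith [ic_mono hmono (Nat.le_succ n)]
  refine ⟨max c c', le_max_of_le_left hc, ⟨le_min h0.1 h0'.1, ?_⟩, fun n => ?_⟩
  · exact (min_le_left _ _).trans (h0.2.trans
      (mul_le_mul_of_nonneg_right (le_max_left _ _) (ic_nonneg 0)))
  · obtain ⟨a1, a2⟩ := hs n; obtain ⟨b1, b2⟩ := hs' n
    have e1 : min (y (n+1)) (y' (n+1)) ≤ min (y n) (y' n) + max c c' * (ic In (n+1) - ic In n) := by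
      rcases le_total (y n) (y' n) with h | h
      · have := mul_nonneg (sub_nonneg.2 (le_max_left c c')) (hΔ n)
        have := min_le_left (y (n+1)) (y' (n+1))
        have hmin : min (y n) (y' n) = y n := min_eq_left h
        nlinarith
      · have := mul_nonneg (sub_nonneg.2 (le_max_right c c')) (hΔ n)
        have := min_le_right (y (n+1)) (y' (n+1))
        have hmin : min (y n) (y' n) = y' n := min_eq_right h
        nlinarith
    constructor
    · show 0 ≤ min (y (n+1)) (y' (n+1)) - min (y n) (y' n)
      have := le_min ((min_le_left (y n) (y' n)).trans (by linarith : y n ≤ y (n+1)))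
        ((min_le_right (y n) (y' n)).trans (by linarith : y' n ≤ y' (n+1)))
      linarith
    · show min (y (n+1)) (y' (n+1)) - min (y n) (y' n) ≤ _
      linarith

lemma Xplus_subset_XR {y : ℕ → ℝ} (hmono : Monotone In) (hy : y ∈ Xplus In) : y ∈ XR In :=
  ⟨y, hy, 0, Xplus_zero hmono, by simp⟩

lemma XR_zero (hmono : Monotone In) : (0 : ℕ → ℝ) ∈ XR In :=
  Xplus_subset_XR hmono (Xplus_zero hmono)

lemma XR_add (hmono : Monotone In) {z z' : ℕ → ℝ} (hz : z ∈ XR In) (hz' : z' ∈ XR In) :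
    z + z' ∈ XR In := by
  obtain ⟨a, ha, b, hb, rfl⟩ := hz
  obtain ⟨a', ha', b', hb', rfl⟩ := hz'
  exact ⟨a + a', Xplus_add hmono ha ha', b + b', Xplus_add hmono hb hb', by abel⟩

lemma XR_neg {z : ℕ → ℝ} (hz : z ∈ XR In) : -z ∈ XR In := by
  obtain ⟨a, ha, b, hb, rfl⟩ := hz
  exact ⟨b, hb, a, ha, by abel⟩

lemma XR_smul {z : ℕ → ℝ} (c : ℝ) (hz : z ∈ XR In) : c • z ∈ XR In := by
  obtain ⟨a, ha, b, hb, rfl⟩ := hz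
  rcases le_total 0 c with h | h
  · exact ⟨c • a, Xplus_smul h ha, c • b, Xplus_smul h hb, by
      funext n; simp [mul_sub]⟩
  · exact ⟨(-c) • b, Xplus_smul (by linarith) hb, (-c) • a, Xplus_smul (by linarith) ha, by
      funext n; simp; ring⟩

lemma XR_sub (hmono : Monotone In) {z z' : ℕ → ℝ} (hz : z ∈ XR In) (hz' : z' ∈ XR In) :
    z - z' ∈ XR In := by
  have := XR_add hmono hz (XR_neg hz')
  simpa [sub_eq_add_neg] using this

lemma XR_sup (hmono : Monotone In) {z z' : ℕ → ℝ} (hz : z ∈ XR In) (hz' : z' ∈ XR In) :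
    (fun n => max (z n) (z' n)) ∈ XR In := by
  obtain ⟨a, ha, b, hb, rfl⟩ := hz
  obtain ⟨a', ha', b', hb', rfl⟩ := hz'
  refine ⟨fun n => max (a n + b' n) (a' n + b n),
    Xplus_sup hmono (Xplus_add hmono ha hb') (Xplus_add hmono ha' hb),
    b + b', Xplus_add hmono hb hb', ?_⟩
  funext n
  simp only [Pi.sub_apply, Pi.add_apply]
  rcases le_total (a n - b n) (a' n - b' n) with h | h
  · rw [max_eq_right h, max_eq_right (by linarith : a n + b' n ≤ a' n + b n)]; ring
  · rw [max_eq_left h, max_eq_left (by linarith : a' n + b n ≤ a n + b' n)]; ring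

lemma XR_abs (hmono : Monotone In) {z : ℕ → ℝ} (hz : z ∈ XR In) :
    (fun n => |z n|) ∈ XR In := by
  have := XR_sup hmono hz (XR_neg hz)
  have e : (fun n => max (z n) ((-z) n)) = fun n => |z n| := by
    funext n; simp [abs_eq_max_neg]
  rwa [e] at this

lemma ic_mem_Xplus (hmono : Monotone In) : ic In ∈ Xplus In :=
  ⟨1, zero_le_one, ic In, ic_mem_Xset hmono, by simp⟩

lemma ic_mem_XR (hmono : Monotone In) : ic In ∈ XR In :=
  Xplus_subset_XR hmono (ic_mem_Xplus hmono)

lemma smul_ic_mem_XR (hmono : Monotone In) (c : ℝ) : c • ic In ∈ XR In :=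
  XR_smul c (ic_mem_XR hmono)

lemma Xplus_bound {y : ℕ → ℝ} (hy : y ∈ Xplus In) :
    ∃ C : ℝ, 0 ≤ C ∧ ∀ n, 0 ≤ y n ∧ y n ≤ C * ic In n := by
  obtain ⟨c, hc, x, hx, rfl⟩ := hy
  refine ⟨c, hc, fun n => ⟨mul_nonneg hc (Xset.bounds hx n).1,
    mul_le_mul_of_nonneg_left (Xset.bounds hx n).2 hc⟩⟩

lemma XR_bound {z : ℕ → ℝ} (hz : z ∈ XR In) :
    ∃ C : ℝ, 0 ≤ C ∧ ∀ n, |z n| ≤ C * ic In n := by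
  obtain ⟨a, ha, b, hb, rfl⟩ := hz
  obtain ⟨C, hC, hCa⟩ := Xplus_bound ha
  obtain ⟨D, hD, hDb⟩ := Xplus_bound hb
  refine ⟨C + D, by linarith, fun n => ?_⟩
  have h1 := hCa n
  have h2 := hDb n
  have hic := ic_nonneg (In := In) n
  rw [abs_le]
  constructor <;> simp only [Pi.sub_apply] <;> nlinarith

lemma XR_div_bound {z : ℕ → ℝ} (hz : z ∈ XR In) :
    ∃ C : ℝ, 0 ≤ C ∧ ∀ n, |z n / ic In n| ≤ C := by
  obtain ⟨C, hC, hb⟩ := XR_bound hz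
  refine ⟨C, hC, fun n => ?_⟩
  rcases eq_or_lt_of_le (ic_nonneg (In := In) n) with h | h
  · have : z n = 0 := by
      have := hb n
      rw [← h, mul_zero] at this
      exact abs_eq_zero.mp (le_antisymm this (abs_nonneg _))
    simpa [this] using hC
  · rw [abs_div, abs_of_pos h, div_le_iff₀ h]
    exact hb n

lemma SeqLeq_of_le (hmono : Monotone In) {x y : ℕ → ℝ} (hx : x ∈ XR In) (hy : y ∈ XR In)
    (h : ∀ n, x n ≤ y n) : SeqLeq In x y := by
  obtain ⟨C, hC, hb⟩ := XR_div_bound (XR_sub hmono hy hx)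
  refine Filter.le_liminf_of_le ?_ (Eventually.of_forall fun n => ?_)
  · exact IsBoundedUnder.isCoboundedUnder_ge (isBoundedUnder_of ⟨C, fun k =>
      (le_abs_self _).trans (by simpa [ic] using hb k)⟩)
  · exact div_nonneg (by linarith [h n]) (ic_nonneg n)

section Filters

lemma eventually_one_le_ic [Nonempty ι] (hmono : Monotone In)
    (hcover : ∀ i : ι, ∃ n, i ∈ In n) : ∀ᶠ n in (atTop : Filter ℕ), 1 ≤ ic In n := by
  obtain ⟨n₀, hn₀⟩ := hcover (Classical.arbitrary ι)
  refine eventually_atTop.2 ⟨n₀, fun n hn => ?_⟩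
  have : (Classical.arbitrary ι) ∈ In n := hmono hn hn₀
  have : 1 ≤ (In n).card := Finset.card_pos.mpr ⟨_, this⟩
  simp only [ic]
  exact_mod_cast this

variable {u : ℕ → ℝ} {C : ℝ}

lemma ulim_exists (hb : ∀ n, |u n| ≤ C) (U : Ultrafilter ℕ) :
    ∃ l : ℝ, Tendsto u ↑U (nhds l) := by
  have hle : (U.map u : Filter ℝ) ≤ 𝓟 (Set.Icc (-C) C) := by
    rw [le_principal_iff, Ultrafilter.coe_map, mem_map]
    exact univ_mem' fun n => by simpa [Set.mem_Icc] using abs_le.mp (hb n)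
  obtain ⟨l, _, hl⟩ := (isCompact_Icc (a := -C) (b := C)).ultrafilter_le_nhds (U.map u) hle
  exact ⟨l, hl⟩

lemma liminf_le_ulim (hb : ∀ n, |u n| ≤ C) {U : Ultrafilter ℕ} (hU : ↑U ≤ (atTop : Filter ℕ))
    {l : ℝ} (hl : Tendsto u ↑U (nhds l)) : atTop.liminf u ≤ l := by
  by_contra hcon
  push_neg at hcon
  set b := (l + atTop.liminf u) / 2 with hbdef
  have hb1 : l < b := by
    have : l < atTop.liminf u := hcon
    simp only [hbdef]; linarith
  have hb2 : b < atTop.liminf u := by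
    simp only [hbdef]; linarith
  have hev : ∀ᶠ n in (atTop : Filter ℕ), b < u n :=
    eventually_lt_of_lt_liminf hb2 (isBoundedUnder_of ⟨-C, fun k => neg_le_of_abs_le (hb k)⟩)
  have : b ≤ l := ge_of_tendsto hl ((hev.filter_mono hU).mono fun n hn => le_of_lt hn)
  linarith

lemma exists_ulim_liminf (hb : ∀ n, |u n| ≤ C) :
    ∃ U : Ultrafilter ℕ, ↑U ≤ (atTop : Filter ℕ) ∧
      Tendsto u ↑U (nhds (atTop.liminf u)) := by
  set L := atTop.liminf u
  have hBle : (atTop : Filter ℕ).IsBoundedUnder (· ≤ ·) u :=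
    isBoundedUnder_of ⟨C, fun k => le_of_abs_le (hb k)⟩
  have hBge : (atTop : Filter ℕ).IsBoundedUnder (· ≥ ·) u :=
    isBoundedUnder_of ⟨-C, fun k => neg_le_of_abs_le (hb k)⟩
  have hcp : MapClusterPt L (atTop : Filter ℕ) u := by
    rw [mapClusterPt_iff_frequently]
    intro s hs
    obtain ⟨ε, hε, hball⟩ := Metric.mem_nhds_iff.mp hs
    have hev : ∀ᶠ n in (atTop : Filter ℕ), L - ε < u n :=
      eventually_lt_of_lt_liminf (by linarith) hBge
    have hfreq : ∃ᶠ n in (atTop : Filter ℕ), u n < L + ε :=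
      frequently_lt_of_liminf_lt (IsBoundedUnder.isCoboundedUnder_ge hBle) (by linarith)
    refine (hfreq.and_eventually hev).mono fun n hn => hball ?_
    rw [Metric.mem_ball, Real.dist_eq, abs_sub_lt_iff]
    constructor <;> linarith [hn.1, hn.2]
  exact mapClusterPt_iff_ultrafilter.mp hcp

lemma tendsto_zero_of_liminf (hb : ∀ n, |u n| ≤ C)
    (h1 : 0 ≤ atTop.liminf u) (h2 : 0 ≤ atTop.liminf (fun n => -u n)) :
    Tendsto u atTop (nhds (0 : ℝ)) := by
  rw [NormedAddCommGroup.tendsto_nhds_zero]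
  intro ε hε
  have hBge : (atTop : Filter ℕ).IsBoundedUnder (· ≥ ·) u :=
    isBoundedUnder_of ⟨-C, fun k => neg_le_of_abs_le (hb k)⟩
  have hBge' : (atTop : Filter ℕ).IsBoundedUnder (· ≥ ·) (fun n => -u n) :=
    isBoundedUnder_of ⟨-C, fun k => by
      have := le_of_abs_le (hb k); simp; linarith⟩
  have e1 : ∀ᶠ n in (atTop : Filter ℕ), -ε < u n :=
    eventually_lt_of_lt_liminf (by linarith) hBge
  have e2 : ∀ᶠ n in (atTop : Filter ℕ), -ε < -u n :=
    eventually_lt_of_lt_liminf (by linarith) hBge'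
  refine (e1.and e2).mono fun n hn => ?_
  rw [Real.norm_eq_abs, abs_lt]
  constructor <;> linarith [hn.1, hn.2]

end Filters

section SMFLemmas

lemma shift_mem_Xplus (hmono : Monotone In) {z : ℕ → ℝ} (hz : z ∈ XR In) :
    ∃ K : ℝ, 0 ≤ K ∧ z + K • ic In ∈ Xplus In := by
  obtain ⟨a, ha, b, hb, rfl⟩ := hz
  obtain ⟨c, hc, xb, hxb, rfl⟩ := hb
  refine ⟨c, hc, ?_⟩
  have hmem : ic In - xb ∈ Xset In := by
    refine ⟨⟨?_, ?_⟩, fun n => ⟨?_, ?_⟩⟩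
    · simp only [Pi.sub_apply]
      linarith [(Xset.bounds hxb 0).2]
    · simp only [Pi.sub_apply]
      have : ic In 0 = ((In 0).card : ℝ) := rfl
      linarith [(Xset.bounds hxb 0).1]
    · simp only [Pi.sub_apply]
      have h2 := (hxb.2 n).2
      have : ic In (n+1) = ((In (n+1)).card : ℝ) := rfl
      have : ic In n = ((In n).card : ℝ) := rfl
      simp only [ic] at *
      linarith
    · simp only [Pi.sub_apply]
      have h1 := (hxb.2 n).1
      simp only [ic] at *
      linarith
  have he : a - c • xb + c • ic In = a + c • (ic In - xb) := by
    funext n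
    simp only [Pi.add_apply, Pi.sub_apply, Pi.smul_apply, smul_eq_mul]
    ring
  rw [he]
  exact Xplus_add hmono ha (⟨c, hc, _, hmem, rfl⟩)

lemma shift2_mem_Xplus (hmono : Monotone In) {z z' : ℕ → ℝ}
    (hz : z ∈ XR In) (hz' : z' ∈ XR In) :
    ∃ K : ℝ, 0 ≤ K ∧ z + K • ic In ∈ Xplus In ∧ z' + K • ic In ∈ Xplus In := by
  obtain ⟨K₁, hK₁, h1⟩ := shift_mem_Xplus hmono hz
  obtain ⟨K₂, hK₂, h2⟩ := shift_mem_Xplus hmono hz'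
  have key : ∀ (v : ℕ → ℝ), v + (K₁ + K₂) • ic In = (v + K₁ • ic In) + K₂ • ic In ∧
      v + (K₁ + K₂) • ic In = (v + K₂ • ic In) + K₁ • ic In := fun v => by
    constructor <;> (funext n; simp only [Pi.add_apply, Pi.smul_apply, smul_eq_mul]; ring)
  refine ⟨K₁ + K₂, by linarith, ?_, ?_⟩
  · rw [(key z).1]
    exact Xplus_add hmono h1 (Xplus_smul hK₂ (ic_mem_Xplus hmono))
  · rw [(key z').2]
    exact Xplus_add hmono h2 (Xplus_smul hK₁ (ic_mem_Xplus hmono))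

variable {W : Type*} [TopologicalSpace W] {m : (ℕ → ℝ) → C(W, ℝ)}

lemma m_ic (hm : IsSeqMF In m) : m (ic In) = 1 := hm.2.2.1

lemma m_smul_ic (hmono : Monotone In) (hm : IsSeqMF In m) (c : ℝ) :
    m (c • ic In) = c • (1 : C(W, ℝ)) := by
  rw [hm.2.2.2.2 _ (ic_mem_XR hmono) c, m_ic hm]

lemma m_shift_eval (hmono : Monotone In) (hm : IsSeqMF In m) {z : ℕ → ℝ} (hz : z ∈ XR In)
    (K : ℝ) (w : W) : m (z + K • ic In) w = m z w + K := by
  rw [hm.2.2.2.1 _ hz _ (smul_ic_mem_XR hmono K), ]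
  simp [m_smul_ic hmono hm K]

/-- Extension of the order property from `X⁺` to `X^ℝ`. -/
lemma mLeq_iff (hmono : Monotone In) (hm : IsSeqMF In m) {x y : ℕ → ℝ}
    (hx : x ∈ XR In) (hy : y ∈ XR In) :
    (∀ w : W, m x w ≤ m y w) ↔ SeqLeq In x y := by
  obtain ⟨K, hK, hxp, hyp⟩ := shift2_mem_Xplus hmono hx hy
  have e : ∀ w : W, (m (x + K • ic In) w ≤ m (y + K • ic In) w ↔ m x w ≤ m y w) := fun w => by
    rw [m_shift_eval hmono hm hx K w, m_shift_eval hmono hm hy K w]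
    exact add_le_add_iff_right K
  have harg : (fun n => ((y + K • ic In) n - (x + K • ic In) n) / ((In n).card : ℝ)) =
      fun n => (y n - x n) / ((In n).card : ℝ) := by
    funext n
    simp only [Pi.add_apply, Pi.smul_apply, smul_eq_mul]
    congr 1
    ring
  have h2 := hm.2.1 _ hxp _ hyp
  constructor
  · intro h
    have := h2.mp (fun w => (e w).mpr (h w))
    unfold SeqLeq at this ⊢
    rwa [harg] at this
  · intro h
    intro w
    refine (e w).mp (h2.mpr ?_ w)
    unfold SeqLeq at h ⊢
    rwa [harg]

lemma W_nonempty [Nonempty ι] (hmono : Monotone In) (hcover : ∀ i : ι, ∃ n, i ∈ In n)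
    (hm : IsSeqMF In m) : Nonempty W := by
  by_contra h
  rw [not_nonempty_iff] at h
  have h2 := (hm.2.1 _ (ic_mem_Xplus hmono) _ (Xplus_zero hmono)).mp
    (fun w => (h.false w).elim)
  have harg : ∀ᶠ n in (atTop : Filter ℕ),
      ((0 : ℕ → ℝ) n - ic In n) / ((In n).card : ℝ) = -1 := by
    filter_upwards [eventually_one_le_ic hmono hcover] with n hn
    have hne : ic In n ≠ 0 := ne_of_gt (lt_of_lt_of_le zero_lt_one hn)
    have : ic In n = ((In n).card : ℝ) := rfl
    rw [Pi.zero_apply, zero_sub, ← this, neg_div, div_self hne]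
  have hval : atTop.liminf (fun n => ((0 : ℕ → ℝ) n - ic In n) / ((In n).card : ℝ))
      = (-1 : ℝ) := by
    rw [liminf_congr harg, liminf_const]
  unfold SeqLeq at h2
  rw [hval] at h2
  linarith

end SMFLemmas

section Main

variable {W : Type*} [TopologicalSpace W]

variable (In) in
/-- Evaluation map into the product space `ℝ^(X^ℝ)`. -/
def Emap (m : (ℕ → ℝ) → C(W, ℝ)) : W → (↥(XR In) → ℝ) := fun w x => m x.1 w

variable (In) in
/-- The canonical "boundary": ultrafilter limit functionals. -/
def OmegaSet : Set (↥(XR In) → ℝ) :=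
  {f | ∃ U : Ultrafilter ℕ, ↑U ≤ (atTop : Filter ℕ) ∧
    ∀ x : ↥(XR In), Tendsto (fun n => x.1 n / ic In n) ↑U (nhds (f x))}

lemma Emap_continuous {m : (ℕ → ℝ) → C(W, ℝ)} : Continuous (Emap In m) :=
  continuous_pi fun x => (m x.1).continuous

lemma Omega_subset_range [Nonempty ι] [CompactSpace W] [T2Space W]
    (hmono : Monotone In) (hcover : ∀ i : ι, ∃ n, i ∈ In n)
    {m : (ℕ → ℝ) → C(W, ℝ)} (hm : IsSeqMF In m) :
    OmegaSet In ⊆ Set.range (Emap In m) := by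
  rintro f ⟨U, hU, hlim⟩
  by_contra hf
  have hcl : IsClosed (Set.range (Emap In m)) :=
    (isCompact_range (Emap_continuous (m := m))).isClosed
  obtain ⟨J, u, hJu, hsub⟩ := isOpen_pi_iff.mp hcl.isOpen_compl f hf
  rcases Finset.eq_empty_or_nonempty J with rfl | hJ
  · obtain ⟨w⟩ := W_nonempty hmono hcover hm
    have : Emap In m w ∈ (Set.range (Emap In m))ᶜ := hsub (by simp)
    exact this (Set.mem_range_self w)
  -- choose a uniform ε
  have hball : ∀ x ∈ J, ∃ ε > 0, Metric.ball (f x) ε ⊆ u x := fun x hx =>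
    Metric.isOpen_iff.mp (hJu x hx).1 _ (hJu x hx).2
  choose εf hεpos hεsub using hball
  have hJA : J.attach.Nonempty := Finset.attach_nonempty_iff.mpr hJ
  set ε : ℝ := J.attach.inf' hJA (fun x => εf x.1 x.2) with hεdef
  have hεpos' : 0 < ε := by
    rw [hεdef, Finset.lt_inf'_iff]
    exact fun b _ => hεpos b.1 b.2
  have hεle : ∀ x (hx : x ∈ J), ε ≤ εf x hx := fun x hx =>
    Finset.inf'_le _ (Finset.mem_attach _ ⟨x, hx⟩)
  -- the sequence z = sup over J of |x - f(x) i|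
  set g : ↥(XR In) → (ℕ → ℝ) := fun x => fun n => |(x.1 - f x • ic In) n| with hgdef
  have hgXR : ∀ x : ↥(XR In), g x ∈ XR In := fun x =>
    XR_abs hmono (XR_sub hmono x.2 (smul_ic_mem_XR hmono (f x)))
  set Z : ℕ → ℝ := J.sup' hJ g with hZdef
  have hZXR : Z ∈ XR In := by
    rw [hZdef]
    refine Finset.sup'_induction hJ g (fun a ha b hb => ?_) (fun x _ => hgXR x)
    have : a ⊔ b = fun n => max (a n) (b n) := rfl
    rw [this]
    exact XR_sup hmono ha hb
  have hZeval : ∀ n, Z n = J.sup' hJ (fun x => g x n) := fun n => by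
    rw [hZdef]; exact Finset.sup'_apply hJ g n
  -- pointwise bounds: ±(x - f x • ic) ≤ Z for x ∈ J
  have hptle : ∀ x (hx : x ∈ J) (n : ℕ), (x.1 - f x • ic In) n ≤ Z n ∧
      -((x.1 - f x • ic In) n) ≤ Z n := by
    intro x hx n
    have h1 : g x n ≤ Z n := by
      rw [hZeval n]
      exact Finset.le_sup' (f := fun x => g x n) hx
    constructor
    · exact (le_abs_self _).trans h1
    · exact (neg_le_abs _).trans h1
  -- m Z dominates |m x - f x| for x ∈ J
  have hmZ : ∀ x (hx : x ∈ J) (w : W), |m x.1 w - f x| ≤ m Z w := by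
    intro x hx w
    have hyx : (x.1 - f x • ic In) ∈ XR In :=
      XR_sub hmono x.2 (smul_ic_mem_XR hmono (f x))
    have h1 : ∀ w : W, m (x.1 - f x • ic In) w ≤ m Z w :=
      (mLeq_iff hmono hm hyx hZXR).mpr
        (SeqLeq_of_le hmono hyx hZXR (fun n => (hptle x hx n).1))
    have h2 : ∀ w : W, m (-(x.1 - f x • ic In)) w ≤ m Z w :=
      (mLeq_iff hmono hm (XR_neg hyx) hZXR).mpr
        (SeqLeq_of_le hmono (XR_neg hyx) hZXR (fun n => (hptle x hx n).2))
    have hval : m (x.1 - f x • ic In) w = m x.1 w - f x := by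
      have he : x.1 - f x • ic In = x.1 + (-(f x)) • ic In := by
        funext n
        simp only [Pi.add_apply, Pi.sub_apply, Pi.smul_apply, smul_eq_mul]
        ring
      rw [he, m_shift_eval hmono hm x.2 (-(f x)) w]
      ring
    have hvalneg : m (-(x.1 - f x • ic In)) w = -(m x.1 w - f x) := by
      have he : -(x.1 - f x • ic In) = (-1 : ℝ) • (x.1 - f x • ic In) := by
        funext n; simp
      rw [he, hm.2.2.2.2 _ hyx (-1)]
      simp [hval]
    rw [abs_le]
    constructor
    · have := h2 w
      rw [hvalneg] at this
      linarith
    · rw [← hval]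
      exact h1 w
  -- every w is ε-far from f on some coordinate in J
  have hout : ∀ w : W, ∃ x, ∃ hx : x ∈ J, ε ≤ |m x.1 w - f x| := by
    intro w
    have : Emap In m w ∉ (↑J : Set ↥(XR In)).pi u := by
      intro hmem
      exact (hsub hmem) (Set.mem_range_self w)
    rw [Set.mem_pi] at this
    push_neg at this
    obtain ⟨x, hx, hxu⟩ := this
    have hx' : x ∈ J := hx
    refine ⟨x, hx', ?_⟩
    have : m x.1 w ∉ Metric.ball (f x) (εf x hx') := fun hball' => hxu (hεsub x hx' hball')
    rw [Metric.mem_ball, Real.dist_eq, not_lt] at this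
    exact le_trans (hεle x hx') this
  -- hence ε ≤ m Z everywhere
  have hεZ : ∀ w : W, m (ε • ic In) w ≤ m Z w := by
    intro w
    obtain ⟨x, hx, hxf⟩ := hout w
    have : m (ε • ic In) w = ε := by
      rw [m_smul_ic hmono hm ε]
      simp
    rw [this]
    exact le_trans hxf (hmZ x hx w)
  have hSeq : SeqLeq In (ε • ic In) Z :=
    (mLeq_iff hmono hm (smul_ic_mem_XR hmono ε) hZXR).mp hεZ
  -- but the U-limit of Z/ic is 0
  have hZnonneg : ∀ n, 0 ≤ Z n := by
    intro n
    rw [hZeval n]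
    obtain ⟨x₀, hx₀⟩ := hJ
    exact le_trans (abs_nonneg _) (Finset.le_sup' (f := fun x => g x n) hx₀)
  have hlimZ : Tendsto (fun n => Z n / ic In n) ↑U (nhds 0) := by
    set S : ℕ → ℝ := fun n => ∑ x ∈ J, |x.1 n / ic In n - f x| with hSdef
    have hSlim : Tendsto S ↑U (nhds 0) := by
      have : Tendsto S ↑U (nhds (∑ x ∈ J, |f x - f x|)) := by
        apply tendsto_finset_sum
        intro x _
        exact ((hlim x).sub_const (f x)).abs
      simpa using this
    apply squeeze_zero (fun n => div_nonneg (hZnonneg n) (ic_nonneg n)) _ hSlim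
    intro n
    rcases eq_or_lt_of_le (ic_nonneg (In := In) n) with hzero | hpos
    · rw [← hzero, div_zero]
      exact Finset.sum_nonneg fun x _ => abs_nonneg _
    · rw [div_le_iff₀ hpos, hZeval n]
      apply Finset.sup'_le
      intro x hx
      have heq : g x n = |x.1 n / ic In n - f x| * ic In n := by
        have habs : |x.1 n / ic In n - f x| * ic In n
            = |(x.1 n / ic In n - f x) * ic In n| := by
          rw [abs_mul, abs_of_pos hpos]
        rw [hgdef]
        simp only [Pi.sub_apply, Pi.smul_apply, smul_eq_mul]
        rw [habs]
        congr 1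
        field_simp
      rw [heq]
      apply mul_le_mul_of_nonneg_right _ (le_of_lt hpos)
      exact Finset.single_le_sum (f := fun x => |x.1 n / ic In n - f x|)
        (fun y _ => abs_nonneg _) hx
  -- contradiction
  have hbd : ∃ C, 0 ≤ C ∧ ∀ n, |(Z - ε • ic In) n / ic In n| ≤ C :=
    XR_div_bound (XR_sub hmono hZXR (smul_ic_mem_XR hmono ε))
  obtain ⟨C, hC, hCb⟩ := hbd
  set u' : ℕ → ℝ := fun n => (Z n - (ε • ic In) n) / ((In n).card : ℝ) with hu'def
  have hu'b : ∀ n, |u' n| ≤ C := fun n => hCb n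
  have hu'lim : Tendsto u' ↑U (nhds (-ε)) := by
    have hev : u' =ᶠ[(U : Filter ℕ)] (fun n => Z n / ic In n - ε) := by
      apply Eventually.filter_mono hU
      filter_upwards [eventually_one_le_ic hmono hcover] with n hn
      have hne : ic In n ≠ 0 := ne_of_gt (lt_of_lt_of_le zero_lt_one hn)
      rw [hu'def]
      show (Z n - ε * ic In n) / ic In n = Z n / ic In n - ε
      rw [sub_div, mul_div_assoc, div_self hne, mul_one]
    have : Tendsto (fun n => Z n / ic In n - ε) ↑U (nhds (0 - ε)) :=
      hlimZ.sub_const ε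
    rw [zero_sub] at this
    exact Tendsto.congr' hev.symm this
  have h1 : (0 : ℝ) ≤ atTop.liminf u' := hSeq
  have h2 : atTop.liminf u' ≤ -ε := liminf_le_ulim hu'b hU hu'lim
  linarith

end Main

section Crux

variable {W : Type*} [TopologicalSpace W] [CompactSpace W] [T2Space W] [Nonempty ι]

lemma SL_lemma (hmono : Monotone In) (hcover : ∀ i : ι, ∃ n, i ∈ In n)
    {m : (ℕ → ℝ) → C(W, ℝ)} (hm : IsSeqMF In m)
    {x y : ℕ → ℝ} (hx : x ∈ XR In) (hy : y ∈ XR In)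
    (h : ∀ w : W, Emap In m w ∈ closure (OmegaSet In) → m x w ≤ m y w) :
    SeqLeq In x y := by
  unfold SeqLeq
  by_contra hneg
  push_neg at hneg
  obtain ⟨C, hC, hb⟩ := XR_div_bound (XR_sub hmono hy hx)
  set u : ℕ → ℝ := fun n => (y n - x n) / ((In n).card : ℝ) with hudef
  have hbu : ∀ n, |u n| ≤ C := fun n => by
    have := hb n
    simpa [hudef, ic] using this
  obtain ⟨U, hU, hUl⟩ := exists_ulim_liminf hbu
  have hex : ∀ x' : ↥(XR In), ∃ l, Tendsto (fun n => x'.1 n / ic In n) ↑U (nhds l) := by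
    intro x'
    obtain ⟨C', hC', hb'⟩ := XR_div_bound x'.2
    exact ulim_exists (fun n => hb' n) U
  choose f hf using hex
  have hfΩ : f ∈ OmegaSet In := ⟨U, hU, hf⟩
  obtain ⟨w, hw⟩ := Omega_subset_range hmono hcover hm hfΩ
  have hwV : Emap In m w ∈ closure (OmegaSet In) := by
    rw [hw]; exact subset_closure hfΩ
  have hle : m x w ≤ m y w := h w hwV
  have hxval : m x w = f ⟨x, hx⟩ := by rw [← hw]; rfl
  have hyval : m y w = f ⟨y, hy⟩ := by rw [← hw]; rfl
  have hsub : Tendsto u ↑U (nhds (f ⟨y, hy⟩ - f ⟨x, hx⟩)) := by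
    have := (hf ⟨y, hy⟩).sub (hf ⟨x, hx⟩)
    refine this.congr fun n => ?_
    show (⟨y, hy⟩ : ↥(XR In)).1 n / ic In n - (⟨x, hx⟩ : ↥(XR In)).1 n / ic In n = u n
    rw [div_sub_div_same]
    rfl
  have heq : atTop.liminf u = f ⟨y, hy⟩ - f ⟨x, hx⟩ := tendsto_nhds_unique hUl hsub
  rw [heq] at hneg
  rw [hxval, hyval] at hle
  linarith

lemma restrict_SMF (hmono : Monotone In) (hcover : ∀ i : ι, ∃ n, i ∈ In n)
    {m : (ℕ → ℝ) → C(W, ℝ)} (hm : IsSeqMF In m) :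
    IsSeqMF In (fun x => (m x).restrict (Emap In m ⁻¹' (closure (OmegaSet In)))) := by
  set V : Set W := Emap In m ⁻¹' (closure (OmegaSet In)) with hVdef
  have hSL : ∀ x ∈ XR In, ∀ y ∈ XR In,
      (∀ v : ↥V, ((m x).restrict V) v ≤ ((m y).restrict V) v) → SeqLeq In x y := by
    intro x hx y hy h
    refine SL_lemma hmono hcover hm hx hy (fun w hw => ?_)
    exact h ⟨w, hw⟩
  refine ⟨?_, ?_, ?_, ?_, ?_⟩
  · intro x hx y hy
    constructor
    · intro h
      have h1 : SeqLeq In x y := hSL x hx y hy (fun v => le_of_eq (ContinuousMap.congr_fun h v))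
      have h2 : SeqLeq In y x := hSL y hy x hx (fun v => ge_of_eq (ContinuousMap.congr_fun h v))
      -- combine to SeqApprox
      obtain ⟨C, hC, hb⟩ := XR_div_bound (XR_sub hmono hx hy)
      set u : ℕ → ℝ := fun n => (x n - y n) / ((In n).card : ℝ) with hudef
      have hbu : ∀ n, |u n| ≤ C := fun n => by simpa [hudef, ic] using hb n
      have hnegu : (fun n => -u n) = fun n => (y n - x n) / ((In n).card : ℝ) := by
        funext n
        rw [hudef]
        show -((x n - y n) / _) = _
        rw [← neg_div, neg_sub]
      have hl1 : 0 ≤ atTop.liminf u := h2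
      have hl2 : 0 ≤ atTop.liminf (fun n => -u n) := by rw [hnegu]; exact h1
      exact tendsto_zero_of_liminf hbu hl1 hl2
    · intro h
      have : m x = m y := (hm.1 x hx y hy).mpr h
      show (m x).restrict V = (m y).restrict V
      rw [this]
  · intro x hx y hy
    constructor
    · intro h
      exact hSL x (Xplus_subset_XR hmono hx) y (Xplus_subset_XR hmono hy) h
    · intro h v
      exact (hm.2.1 x hx y hy).mpr h v.1
  · ext v
    have : m (fun n => ((In n).card : ℝ)) = 1 := hm.2.2.1
    show m (fun n => ((In n).card : ℝ)) v.1 = 1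
    rw [this]
    rfl
  · intro x hx y hy
    ext v
    show m (x + y) v.1 = _
    rw [hm.2.2.2.1 x hx y hy]
    rfl
  · intro x hx c
    ext v
    show m (c • x) v.1 = _
    rw [hm.2.2.2.2 x hx c]
    rfl

lemma range_eq_closure_Omega (hmono : Monotone In) (hcover : ∀ i : ι, ∃ n, i ∈ In n)
    {m : (ℕ → ℝ) → C(W, ℝ)} (hm : IsSeqMF In m) (hirr : ¬ SMFReducible In m) :
    Set.range (Emap In m) = closure (OmegaSet In) := by
  have hsub1 : closure (OmegaSet In) ⊆ Set.range (Emap In m) :=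
    closure_minimal (Omega_subset_range hmono hcover hm)
      (isCompact_range (Emap_continuous (m := m))).isClosed
  refine Set.Subset.antisymm ?_ hsub1
  set V : Set W := Emap In m ⁻¹' (closure (OmegaSet In)) with hVdef
  have hVuniv : V = Set.univ := by
    by_contra hne
    exact hirr ⟨V, (isClosed_closure.preimage (Emap_continuous (m := m))).isCompact, hne,
      restrict_SMF hmono hcover hm⟩
  rintro p ⟨w, rfl⟩
  have : w ∈ V := hVuniv ▸ Set.mem_univ w
  exact this

end Crux

end SMF14

/-- any two minimal sequence measure functions are topologically
equivalent: there is a homeomorphism `φ : W₁ → W₂` with `m₂ x (φ w) = m₁ x w` for all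
`x ∈ X^ℝ` and `w ∈ W₁`. -/
theorem stmt14 {ι : Type*} [Countable ι] [Infinite ι]
    (In : ℕ → Finset ι) (hmono : Monotone In) (hcover : ∀ i : ι, ∃ n, i ∈ In n)
    {W₁ : Type*} [TopologicalSpace W₁] [CompactSpace W₁] [T2Space W₁]
    {W₂ : Type*} [TopologicalSpace W₂] [CompactSpace W₂] [T2Space W₂]
    (m₁ : (ℕ → ℝ) → C(W₁, ℝ)) (hm₁ : IsSeqMF In m₁) (hmin₁ : SMFMinimal In m₁)
    (m₂ : (ℕ → ℝ) → C(W₂, ℝ)) (hm₂ : IsSeqMF In m₂) (hmin₂ : SMFMinimal In m₂) :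
    ∃ φ : W₁ ≃ₜ W₂, ∀ x ∈ XR In, ∀ w : W₁, m₂ x (φ w) = m₁ x w := by
  classical
  have hinj₁ : Function.Injective (SMF14.Emap In m₁) := by
    intro v w h
    by_contra hne
    obtain ⟨x, hx, hxne⟩ := hmin₁.1 v w hne
    exact hxne (congrFun h ⟨x, hx⟩)
  have hinj₂ : Function.Injective (SMF14.Emap In m₂) := by
    intro v w h
    by_contra hne
    obtain ⟨x, hx, hxne⟩ := hmin₂.1 v w hne
    exact hxne (congrFun h ⟨x, hx⟩)
  have hK : Set.range (SMF14.Emap In m₁) = Set.range (SMF14.Emap In m₂) := by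
    rw [SMF14.range_eq_closure_Omega hmono hcover hm₁ hmin₁.2,
        SMF14.range_eq_closure_Omega hmono hcover hm₂ hmin₂.2]
  let e₁ : W₁ ≃ Set.range (SMF14.Emap In m₁) := Equiv.ofInjective _ hinj₁
  have hc₁ : Continuous e₁ := Continuous.subtype_mk SMF14.Emap_continuous _
  let h₁ : W₁ ≃ₜ Set.range (SMF14.Emap In m₁) := hc₁.homeoOfEquivCompactToT2
  let e₂ : W₂ ≃ Set.range (SMF14.Emap In m₂) := Equiv.ofInjective _ hinj₂
  have hc₂ : Continuous e₂ := Continuous.subtype_mk SMF14.Emap_continuous _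
  let h₂ : W₂ ≃ₜ Set.range (SMF14.Emap In m₂) := hc₂.homeoOfEquivCompactToT2
  refine ⟨h₁.trans ((Homeomorph.setCongr hK).trans h₂.symm), fun x hx w => ?_⟩
  have c₂ : ∀ w' : W₂, (↑(h₂ w') : ↥(XR In) → ℝ) = SMF14.Emap In m₂ w' := fun w' => by
    show (↑(Equiv.ofInjective _ hinj₂ w') : ↥(XR In) → ℝ) = _
    simp [Equiv.ofInjective_apply]
  have c₁ : (↑(h₁ w) : ↥(XR In) → ℝ) = SMF14.Emap In m₁ w := by
    show (↑(Equiv.ofInjective _ hinj₁ w) : ↥(XR In) → ℝ) = _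
    simp [Equiv.ofInjective_apply]
  have cset : (↑((Homeomorph.setCongr hK) (h₁ w)) : ↥(XR In) → ℝ) = ↑(h₁ w) := rfl
  have key : SMF14.Emap In m₂ ((h₁.trans ((Homeomorph.setCongr hK).trans h₂.symm)) w)
      = SMF14.Emap In m₁ w := by
    have e : (h₁.trans ((Homeomorph.setCongr hK).trans h₂.symm)) w
        = h₂.symm ((Homeomorph.setCongr hK) (h₁ w)) := rfl
    rw [e, ← c₂ (h₂.symm ((Homeomorph.setCongr hK) (h₁ w))), Homeomorph.apply_symm_apply,
      cset, c₁]
  exact congrFun key ⟨x, hx⟩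


end
end

section
/- Let I be a countable set and d a quasi-distance on I with finite upper density. Then the set C of non-expansive bounded operators on ℓ²(I) is: (1) closed under addition and scalar multiplication (if A, B ∈ C and c ∈ ℂ then A + B ∈ C and cA ∈ C); (2) closed under composition (if A, B ∈ C then AB ∈ C); (3) closed in the operator norm topology (if A_k ∈ C and ‖A − A_k‖ → 0 then A ∈ C); and it is invariant under taking adjoints. Consequently C is a C*-subalgebra of the bounded operators on ℓ²(I). -/
open Filter Topology

set_option maxHeartbeats 1000000
set_option synthInstance.maxHeartbeats 400000

noncomputable section

/-- `δ i`: the canonical orthonormal basis of `ℓ²(I)`. -/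
def del (ι : Type*) (i : ι) : lp (fun _ : ι => ℂ) 2 :=
  letI := Classical.decEq ι
  lp.single 2 i (1 : ℂ)

/-- `d` is a quasi-distance on `ι`. -/
def IsQuasiDist {ι : Type*} (d : ι → ι → ℝ) : Prop :=
  (∀ i j, 0 ≤ d i j) ∧ (∀ i, d i i = 0) ∧ (∀ i j, d i j = d j i) ∧
  (∀ i j k, d i j ≤ d i k + d k j)

/-- `(ι, d)` has finite upper density: `sup_i |B_R(i)| < ∞` for every `R > 0`. -/
def FinUpperDensity {ι : Type*} (d : ι → ι → ℝ) : Prop :=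
  ∀ R > (0 : ℝ), ∃ C : ℕ, ∀ i : ι,
    {j : ι | d i j ≤ R}.Finite ∧ {j : ι | d i j ≤ R}.ncard ≤ C

/-- A bounded operator `A` on `ℓ²(I)` is row non-expansive: for every `ε > 0` there is
`N > 0` with `∑_{j ∉ B_N(i)} |⟨Aδᵢ, δⱼ⟩|² < ε` for all `i`. -/
def RowNonExp {ι : Type*} (d : ι → ι → ℝ)
    (A : lp (fun _ : ι => ℂ) 2 →L[ℂ] lp (fun _ : ι => ℂ) 2) : Prop :=
  ∀ ε > (0 : ℝ), ∃ N > (0 : ℝ), ∀ i : ι,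
    ∑' j : {j : ι // N < d i j}, ‖(inner ℂ (A (del ι i)) (del ι (j : ι)) : ℂ)‖ ^ 2 < ε

/-- `A` is non-expansive if both `A` and `A*` are row non-expansive. -/
def NonExp {ι : Type*} (d : ι → ι → ℝ)
    (A : lp (fun _ : ι => ℂ) 2 →L[ℂ] lp (fun _ : ι => ℂ) 2) : Prop :=
  RowNonExp d A ∧ RowNonExp d (ContinuousLinearMap.adjoint A)

namespace Stmt15Aux

variable {ι : Type*}

lemma two_toReal : ((2 : ENNReal)).toReal = ((2 : ℕ) : ℝ) := by norm_num

lemma rpow_two_eq (a : ℝ) : a ^ ((2 : ENNReal)).toReal = a ^ 2 := by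
  rw [two_toReal, Real.rpow_natCast]

lemma summable_sq (x : lp (fun _ : ι => ℂ) 2) : Summable (fun j => ‖x j‖ ^ 2) := by
  have h := Memℓp.summable (by norm_num) (lp.memℓp x)
  simpa only [rpow_two_eq] using h

lemma norm_sq_eq (x : lp (fun _ : ι => ℂ) 2) : ‖x‖ ^ 2 = ∑' j, ‖x j‖ ^ 2 := by
  have h := lp.norm_rpow_eq_tsum (by norm_num : 0 < ((2:ENNReal)).toReal) x
  simpa only [rpow_two_eq] using h

/-- restriction of coordinates to a subtype, as a linear map between `ℓ²` spaces. -/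
def restr (P : ι → Prop) : lp (fun _ : ι => ℂ) 2 →ₗ[ℂ] lp (fun _ : Subtype P => ℂ) 2 where
  toFun x := ⟨fun j => x (j : ι), by
    apply memℓp_gen
    have h := (summable_sq x).subtype {j | P j}
    refine Summable.congr h fun j => ?_
    simp only [Function.comp_apply, rpow_two_eq]⟩
  map_add' x y := by
    ext j
    simp [lp.coeFn_add]
    rfl
  map_smul' c x := by
    ext j
    simp [lp.coeFn_smul]

@[simp] lemma restr_apply (P : ι → Prop) (x : lp (fun _ : ι => ℂ) 2) (j : Subtype P) :
    (restr P x : ∀ _ : Subtype P, ℂ) j = x (j : ι) := rfl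

lemma norm_restr_sq (P : ι → Prop) (x : lp (fun _ : ι => ℂ) 2) :
    ‖restr P x‖ ^ 2 = ∑' j : Subtype P, ‖x (j : ι)‖ ^ 2 := by
  rw [norm_sq_eq]
  exact tsum_congr fun j => rfl

lemma tsum_sq_mono {P Q : ι → Prop} (h : ∀ j, P j → Q j) (x : lp (fun _ : ι => ℂ) 2) :
    ∑' j : Subtype P, ‖x (j : ι)‖ ^ 2 ≤ ∑' j : Subtype Q, ‖x (j : ι)‖ ^ 2 := by
  have e1 : ∑' j : Subtype P, ‖x (j : ι)‖ ^ 2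
      = ∑' j, Set.indicator {j | P j} (fun j => ‖x j‖ ^ 2) j :=
    tsum_subtype {j | P j} (fun j => ‖x j‖ ^ 2)
  have e2 : ∑' j : Subtype Q, ‖x (j : ι)‖ ^ 2
      = ∑' j, Set.indicator {j | Q j} (fun j => ‖x j‖ ^ 2) j :=
    tsum_subtype {j | Q j} (fun j => ‖x j‖ ^ 2)
  rw [e1, e2]
  refine Summable.tsum_le_tsum (fun j => ?_) ?_ ?_
  · exact Set.indicator_le_indicator_of_subset (fun j hj => h j hj)
      (fun j => by positivity) j
  · exact (summable_sq x).indicator _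
  · exact (summable_sq x).indicator _

lemma tsum_sq_le_norm (P : ι → Prop) (x : lp (fun _ : ι => ℂ) 2) :
    ∑' j : Subtype P, ‖x (j : ι)‖ ^ 2 ≤ ‖x‖ ^ 2 := by
  rw [norm_sq_eq]
  exact Summable.tsum_subtype_le (fun j => ‖x j‖ ^ 2) {j | P j} (fun j => by positivity) (summable_sq x)

lemma norm_restr_le (P : ι → Prop) (x : lp (fun _ : ι => ℂ) 2) : ‖restr P x‖ ≤ ‖x‖ := by
  have h : ‖restr P x‖ ^ 2 ≤ ‖x‖ ^ 2 := by
    rw [norm_restr_sq]; exact tsum_sq_le_norm P x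
  have h2 := Real.sqrt_le_sqrt h
  rwa [Real.sqrt_sq (norm_nonneg _), Real.sqrt_sq (norm_nonneg _)] at h2

lemma norm_del (i : ι) : ‖del ι i‖ = 1 := by
  letI := Classical.decEq ι
  have h := lp.norm_single (p := 2) (E := fun _ : ι => ℂ) (by norm_num) i (1 : ℂ)
  simpa [del] using h

lemma norm_inner_del (x : lp (fun _ : ι => ℂ) 2) (j : ι) :
    ‖(inner ℂ x (del ι j) : ℂ)‖ = ‖x j‖ := by
  letI := Classical.decEq ι
  rw [show del ι j = lp.single 2 j (1 : ℂ) from rfl, lp.inner_single_right, RCLike.inner_apply]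
  simp

/-- coordinate form of row non-expansiveness. -/
def Row' (d : ι → ι → ℝ) (A : lp (fun _ : ι => ℂ) 2 →L[ℂ] lp (fun _ : ι => ℂ) 2) : Prop :=
  ∀ ε > (0 : ℝ), ∃ N > (0 : ℝ), ∀ i : ι,
    ∑' j : {j : ι // N < d i j}, ‖(A (del ι i)) (j : ι)‖ ^ 2 < ε

lemma tail_congr (d : ι → ι → ℝ) (A : lp (fun _ : ι => ℂ) 2 →L[ℂ] lp (fun _ : ι => ℂ) 2)
    (N : ℝ) (i : ι) :
    (∑' j : {j : ι // N < d i j}, ‖(inner ℂ (A (del ι i)) (del ι (j : ι)) : ℂ)‖ ^ 2)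
      = ∑' j : {j : ι // N < d i j}, ‖(A (del ι i)) (j : ι)‖ ^ 2 :=
  tsum_congr fun j => by rw [norm_inner_del]

lemma row_iff (d : ι → ι → ℝ) (A : lp (fun _ : ι => ℂ) 2 →L[ℂ] lp (fun _ : ι => ℂ) 2) :
    RowNonExp d A ↔ Row' d A := by
  constructor
  · intro h ε hε
    obtain ⟨N, hN, hi⟩ := h ε hε
    exact ⟨N, hN, fun i => by rw [← tail_congr]; exact hi i⟩
  · intro h ε hε
    obtain ⟨N, hN, hi⟩ := h ε hε
    exact ⟨N, hN, fun i => by rw [tail_congr]; exact hi i⟩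

variable {d : ι → ι → ℝ} {A B : lp (fun _ : ι => ℂ) 2 →L[ℂ] lp (fun _ : ι => ℂ) 2}

lemma row'_add (hA : Row' d A) (hB : Row' d B) : Row' d (A + B) := by
  intro ε hε
  obtain ⟨N₁, hN₁, h₁⟩ := hA (ε / 4) (by linarith)
  obtain ⟨N₂, hN₂, h₂⟩ := hB (ε / 4) (by linarith)
  refine ⟨max N₁ N₂, lt_max_of_lt_left hN₁, fun i => ?_⟩
  rw [show (∑' j : {j : ι // max N₁ N₂ < d i j}, ‖((A + B) (del ι i)) (j : ι)‖ ^ 2)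
      = ‖restr (fun j => max N₁ N₂ < d i j) ((A + B) (del ι i))‖ ^ 2 from
      (norm_restr_sq _ _).symm]
  have hsplit : restr (fun j => max N₁ N₂ < d i j) ((A + B) (del ι i))
      = restr (fun j => max N₁ N₂ < d i j) (A (del ι i))
        + restr (fun j => max N₁ N₂ < d i j) (B (del ι i)) := by
    rw [ContinuousLinearMap.add_apply, map_add]
  have hA2 : ‖restr (fun j => max N₁ N₂ < d i j) (A (del ι i))‖ ^ 2 < ε / 4 := by
    rw [norm_restr_sq]
    exact lt_of_le_of_lt
      (tsum_sq_mono (fun j hj => lt_of_le_of_lt (le_max_left _ _) hj) _) (h₁ i)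
  have hB2 : ‖restr (fun j => max N₁ N₂ < d i j) (B (del ι i))‖ ^ 2 < ε / 4 := by
    rw [norm_restr_sq]
    exact lt_of_le_of_lt
      (tsum_sq_mono (fun j hj => lt_of_le_of_lt (le_max_right _ _) hj) _) (h₂ i)
  rw [hsplit]
  have htri := norm_add_le (restr (fun j => max N₁ N₂ < d i j) (A (del ι i)))
    (restr (fun j => max N₁ N₂ < d i j) (B (del ι i)))
  have h3 := pow_le_pow_left₀ (norm_nonneg _) htri 2
  set a := ‖restr (fun j => max N₁ N₂ < d i j) (A (del ι i))‖
  set b := ‖restr (fun j => max N₁ N₂ < d i j) (B (del ι i))‖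
  nlinarith [sq_nonneg (a - b)]

lemma row'_smul (c : ℂ) (hA : Row' d A) : Row' d (c • A) := by
  intro ε hε
  have hpos : (0 : ℝ) < ε / (‖c‖ ^ 2 + 1) := by positivity
  obtain ⟨N, hN, h⟩ := hA _ hpos
  refine ⟨N, hN, fun i => ?_⟩
  have hco : ∀ j : {j : ι // N < d i j}, ‖((c • A) (del ι i)) (j : ι)‖ ^ 2
      = ‖c‖ ^ 2 * ‖(A (del ι i)) (j : ι)‖ ^ 2 := by
    intro j
    rw [ContinuousLinearMap.smul_apply, lp.coeFn_smul, Pi.smul_apply, norm_smul, mul_pow]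
  rw [tsum_congr hco, tsum_mul_left]
  have h1 : ‖c‖ ^ 2 * (∑' j : {j : ι // N < d i j}, ‖(A (del ι i)) (j : ι)‖ ^ 2)
      ≤ ‖c‖ ^ 2 * (ε / (‖c‖ ^ 2 + 1)) :=
    mul_le_mul_of_nonneg_left (h i).le (by positivity)
  have h2 : (‖c‖ ^ 2 + 1) * (ε / (‖c‖ ^ 2 + 1)) = ε := by
    field_simp
  nlinarith [hpos]

lemma row'_lim {As : ℕ → (lp (fun _ : ι => ℂ) 2 →L[ℂ] lp (fun _ : ι => ℂ) 2)}
    (hAs : ∀ k, Row' d (As k))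
    (hconv : Tendsto (fun k => ‖A - As k‖) atTop (nhds 0)) : Row' d A := by
  intro ε hε
  have hs : (0 : ℝ) < Real.sqrt (ε / 4) := Real.sqrt_pos.mpr (by linarith)
  obtain ⟨k, hk⟩ := (hconv.eventually_lt_const hs).exists
  obtain ⟨N, hN, h⟩ := hAs k (ε / 4) (by linarith)
  refine ⟨N, hN, fun i => ?_⟩
  rw [show (∑' j : {j : ι // N < d i j}, ‖(A (del ι i)) (j : ι)‖ ^ 2)
      = ‖restr (fun j => N < d i j) (A (del ι i))‖ ^ 2 from (norm_restr_sq _ _).symm]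
  have hdec : restr (fun j => N < d i j) (A (del ι i))
      = restr (fun j => N < d i j) ((A - As k) (del ι i))
        + restr (fun j => N < d i j) ((As k) (del ι i)) := by
    rw [← map_add]
    congr 1
    rw [ContinuousLinearMap.sub_apply]
    abel
  have ha : ‖restr (fun j => N < d i j) ((A - As k) (del ι i))‖ ≤ Real.sqrt (ε / 4) := by
    refine le_trans (norm_restr_le _ _) (le_trans ((A - As k).le_opNorm _) ?_)
    rw [norm_del, mul_one]
    exact hk.le
  have ha2 : ‖restr (fun j => N < d i j) ((A - As k) (del ι i))‖ ^ 2 ≤ ε / 4 := by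
    have := pow_le_pow_left₀ (norm_nonneg _) ha 2
    rwa [Real.sq_sqrt (by linarith : (0:ℝ) ≤ ε / 4)] at this
  have hb2 : ‖restr (fun j => N < d i j) ((As k) (del ι i))‖ ^ 2 < ε / 4 := by
    rw [norm_restr_sq]
    exact h i
  rw [hdec]
  have htri := norm_add_le (restr (fun j => N < d i j) ((A - As k) (del ι i)))
    (restr (fun j => N < d i j) ((As k) (del ι i)))
  have h3 := pow_le_pow_left₀ (norm_nonneg _) htri 2
  set a := ‖restr (fun j => N < d i j) ((A - As k) (del ι i))‖
  set b := ‖restr (fun j => N < d i j) ((As k) (del ι i))‖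
  nlinarith [sq_nonneg (a - b)]

lemma row'_comp (hd : IsQuasiDist d) (hfud : FinUpperDensity d)
    (hA : Row' d A) (hB : Row' d B) : Row' d (A.comp B) := by
  obtain ⟨hnn, hzero, hsymm, htri⟩ := hd
  intro ε hε
  have hεB : (0 : ℝ) < ε / (4 * (‖A‖ ^ 2 + 1)) := by positivity
  obtain ⟨NB, hNB, hB'⟩ := hB _ hεB
  obtain ⟨C, hC⟩ := hfud NB hNB
  have hεA : (0 : ℝ) < ε / (4 * ((C : ℝ) * ‖B‖ ^ 2 + 1)) := by positivity
  obtain ⟨NA, hNA, hA'⟩ := hA _ hεA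
  refine ⟨NA + NB, by linarith, fun i => ?_⟩
  classical
  set S : Finset ι := (hC i).1.toFinset with hSdef
  have hmemS : ∀ j, j ∈ S ↔ d i j ≤ NB := fun j => by
    simp [hSdef, Set.Finite.mem_toFinset]
  have hcardS : ((S.card : ℝ)) ≤ (C : ℝ) := by
    have h := (hC i).2
    rw [Set.ncard_eq_toFinset_card _ (hC i).1] at h
    exact_mod_cast h
  set x : lp (fun _ : ι => ℂ) 2 := B (del ι i) with hx
  set u : lp (fun _ : ι => ℂ) 2 := ∑ k ∈ S, x k • del ι k with hu
  have hucoord : ∀ j, u j = if j ∈ S then x j else 0 := by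
    intro j
    rw [hu, lp.coeFn_sum, Finset.sum_apply]
    have : ∀ k ∈ S, (x k • del ι k : lp (fun _ : ι => ℂ) 2) j
        = if k = j then x j else 0 := by
      intro k _
      rw [lp.coeFn_smul, Pi.smul_apply]
      by_cases hkj : k = j
      · subst hkj
        rw [if_pos rfl, show del ι k = lp.single 2 k (1 : ℂ) from rfl,
          lp.single_apply_self, smul_eq_mul, mul_one]
      · rw [if_neg hkj, show del ι k = lp.single 2 k (1 : ℂ) from rfl,
          lp.single_apply_ne 2 k _ (fun h => hkj h.symm), smul_zero]
    rw [Finset.sum_congr rfl this, Finset.sum_ite_eq' S j (fun _ => x j)]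
  have hxnorm : ‖x‖ ≤ ‖B‖ := by
    have h := B.le_opNorm (del ι i)
    rwa [norm_del, mul_one] at h
  -- the far part of x is small
  have hv : ‖x - u‖ ^ 2 < ε / (4 * (‖A‖ ^ 2 + 1)) := by
    rw [norm_sq_eq]
    have hsupp : Function.support (fun j => ‖(x - u) j‖ ^ 2) ⊆ {j | NB < d i j} := by
      intro j hj
      by_contra hcon
      have hle : d i j ≤ NB := not_lt.mp hcon
      have : (x - u) j = 0 := by
        rw [lp.coeFn_sub, Pi.sub_apply, hucoord j, if_pos ((hmemS j).mpr hle), sub_self]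
      exact hj (by simp [this])
    rw [← tsum_subtype_eq_of_support_subset hsupp]
    have hcg : ∀ j : {j | NB < d i j}, ‖(x - u) (j : ι)‖ ^ 2 = ‖x (j : ι)‖ ^ 2 := by
      rintro ⟨j, hj⟩
      have hnot : j ∉ S := fun hmem => absurd ((hmemS j).mp hmem) (not_le.mpr hj)
      rw [lp.coeFn_sub, Pi.sub_apply, hucoord j, if_neg hnot, sub_zero]
    rw [tsum_congr hcg]
    exact hB' i
  -- rewrite goal
  rw [show (∑' j : {j : ι // NA + NB < d i j}, ‖((A.comp B) (del ι i)) (j : ι)‖ ^ 2)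
      = ‖restr (fun j => NA + NB < d i j) (A x)‖ ^ 2 from (norm_restr_sq _ _).symm]
  have hxuv : A x = A (x - u) + A u := by
    rw [← map_add, sub_add_cancel]
  set a := ‖restr (fun j => NA + NB < d i j) (A (x - u))‖ with hadef
  set b := ‖restr (fun j => NA + NB < d i j) (A u)‖ with hbdef
  have ha2 : a ^ 2 < ε / 4 := by
    have h1 : a ≤ ‖A‖ * ‖x - u‖ := le_trans (norm_restr_le _ _) (A.le_opNorm _)
    have h2 : a ^ 2 ≤ (‖A‖ * ‖x - u‖) ^ 2 := pow_le_pow_left₀ (norm_nonneg _) h1 2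
    have h3 : (‖A‖ * ‖x - u‖) ^ 2 = ‖A‖ ^ 2 * ‖x - u‖ ^ 2 := mul_pow _ _ 2
    have h4 : ‖A‖ ^ 2 * ‖x - u‖ ^ 2 ≤ ‖A‖ ^ 2 * (ε / (4 * (‖A‖ ^ 2 + 1))) :=
      mul_le_mul_of_nonneg_left hv.le (by positivity)
    have h5 : (‖A‖ ^ 2 + 1) * (ε / (4 * (‖A‖ ^ 2 + 1))) = ε / 4 := by
      field_simp
    nlinarith [hεB]
  have hb2 : b ^ 2 < ε / 4 := by
    have hAu : restr (fun j => NA + NB < d i j) (A u)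
        = ∑ k ∈ S, x k • restr (fun j => NA + NB < d i j) (A (del ι k)) := by
      rw [hu, map_sum, map_sum]
      exact Finset.sum_congr rfl fun k _ => by rw [map_smul, map_smul]
    have hterm : ∀ k ∈ S, ‖restr (fun j => NA + NB < d i j) (A (del ι k))‖
        ≤ Real.sqrt (ε / (4 * ((C : ℝ) * ‖B‖ ^ 2 + 1))) := by
      intro k hk
      have hsq : ‖restr (fun j => NA + NB < d i j) (A (del ι k))‖ ^ 2
          ≤ ε / (4 * ((C : ℝ) * ‖B‖ ^ 2 + 1)) := by
        rw [norm_restr_sq]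
        refine le_trans (tsum_sq_mono (fun j hj => ?_) _) (hA' k).le
        have h5 := htri i j k
        have h6 : d i k ≤ NB := (hmemS k).mp hk
        linarith
      have h7 := Real.sqrt_le_sqrt hsq
      rwa [Real.sqrt_sq (norm_nonneg _)] at h7
    have hbt : b ≤ Real.sqrt (ε / (4 * ((C : ℝ) * ‖B‖ ^ 2 + 1))) * ∑ k ∈ S, ‖x k‖ := by
      rw [hbdef, hAu]
      calc ‖∑ k ∈ S, x k • restr (fun j => NA + NB < d i j) (A (del ι k))‖
          ≤ ∑ k ∈ S, ‖x k • restr (fun j => NA + NB < d i j) (A (del ι k))‖ :=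
            norm_sum_le _ _
        _ ≤ ∑ k ∈ S, ‖x k‖ * Real.sqrt (ε / (4 * ((C : ℝ) * ‖B‖ ^ 2 + 1))) :=
            Finset.sum_le_sum fun k hk => by
              rw [norm_smul]
              exact mul_le_mul_of_nonneg_left (hterm k hk) (norm_nonneg _)
        _ = Real.sqrt (ε / (4 * ((C : ℝ) * ‖B‖ ^ 2 + 1))) * ∑ k ∈ S, ‖x k‖ := by
            rw [← Finset.sum_mul, mul_comm]
    have hcs : (∑ k ∈ S, ‖x k‖) ^ 2 ≤ (C : ℝ) * ‖B‖ ^ 2 := by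
      have h7 := Finset.sum_mul_sq_le_sq_mul_sq S (fun _ => (1 : ℝ)) (fun k => ‖x k‖)
      simp only [one_mul, one_pow, Finset.sum_const, nsmul_eq_mul, mul_one] at h7
      have h8 : ∑ k ∈ S, ‖x k‖ ^ 2 ≤ ‖B‖ ^ 2 := by
        have h9 : ∑ k ∈ S, ‖x k‖ ^ 2 ≤ ∑' k, ‖x k‖ ^ 2 :=
          Summable.sum_le_tsum S (fun k _ => by positivity) (summable_sq x)
        rw [← norm_sq_eq] at h9
        have h10 : ‖x‖ ^ 2 ≤ ‖B‖ ^ 2 := pow_le_pow_left₀ (norm_nonneg _) hxnorm 2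
        linarith
      calc (∑ k ∈ S, ‖x k‖) ^ 2 ≤ (S.card : ℝ) * ∑ k ∈ S, ‖x k‖ ^ 2 := h7
        _ ≤ (C : ℝ) * ‖B‖ ^ 2 := by
            have hsum_nn : (0:ℝ) ≤ ∑ k ∈ S, ‖x k‖ ^ 2 :=
              Finset.sum_nonneg fun k _ => by positivity
            nlinarith [hcardS, h8, Nat.cast_nonneg (α := ℝ) C]
    have hb0 : (0 : ℝ) ≤ b := norm_nonneg _
    have hsum_nn : (0:ℝ) ≤ ∑ k ∈ S, ‖x k‖ :=
      Finset.sum_nonneg fun k _ => norm_nonneg _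
    have h11 : b ^ 2 ≤ (Real.sqrt (ε / (4 * ((C : ℝ) * ‖B‖ ^ 2 + 1)))) ^ 2
        * (∑ k ∈ S, ‖x k‖) ^ 2 := by
      rw [← mul_pow]
      exact pow_le_pow_left₀ hb0 hbt 2
    rw [Real.sq_sqrt hεA.le] at h11
    have h12 : (ε / (4 * ((C : ℝ) * ‖B‖ ^ 2 + 1))) * (∑ k ∈ S, ‖x k‖) ^ 2
        ≤ (ε / (4 * ((C : ℝ) * ‖B‖ ^ 2 + 1))) * ((C : ℝ) * ‖B‖ ^ 2) :=
      mul_le_mul_of_nonneg_left hcs hεA.le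
    have h13 : ((C : ℝ) * ‖B‖ ^ 2 + 1) * (ε / (4 * ((C : ℝ) * ‖B‖ ^ 2 + 1))) = ε / 4 := by
      field_simp
    nlinarith [hεA]
  rw [hxuv, map_add]
  have htri2 := norm_add_le (restr (fun j => NA + NB < d i j) (A (x - u)))
    (restr (fun j => NA + NB < d i j) (A u))
  have h14 := pow_le_pow_left₀ (norm_nonneg _) htri2 2
  nlinarith [sq_nonneg (a - b)]

end Stmt15Aux

open Stmt15Aux in
/-- for a countable set `I` with a quasi-distance `d` of finite upper
density, the set `C` of non-expansive bounded operators on `ℓ²(I)` is closed under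
addition, scalar multiplication, composition, adjoints, and operator-norm limits;
consequently `C` is a C*-subalgebra of `B(ℓ²(I))`. -/
theorem stmt15 {ι : Type*} [Countable ι] (d : ι → ι → ℝ)
    (hd : IsQuasiDist d) (hfud : FinUpperDensity d) :
    (∀ A B : lp (fun _ : ι => ℂ) 2 →L[ℂ] lp (fun _ : ι => ℂ) 2,
      NonExp d A → NonExp d B → NonExp d (A + B)) ∧
    (∀ (c : ℂ) (A : lp (fun _ : ι => ℂ) 2 →L[ℂ] lp (fun _ : ι => ℂ) 2),
      NonExp d A → NonExp d (c • A)) ∧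
    (∀ A B : lp (fun _ : ι => ℂ) 2 →L[ℂ] lp (fun _ : ι => ℂ) 2,
      NonExp d A → NonExp d B → NonExp d (A.comp B)) ∧
    (∀ (A : lp (fun _ : ι => ℂ) 2 →L[ℂ] lp (fun _ : ι => ℂ) 2)
      (As : ℕ → (lp (fun _ : ι => ℂ) 2 →L[ℂ] lp (fun _ : ι => ℂ) 2)),
      (∀ k, NonExp d (As k)) → Tendsto (fun k => ‖A - As k‖) atTop (nhds 0) →
      NonExp d A) ∧
    (∀ A : lp (fun _ : ι => ℂ) 2 →L[ℂ] lp (fun _ : ι => ℂ) 2,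
      NonExp d A → NonExp d (ContinuousLinearMap.adjoint A)) := by
  refine ⟨?_, ?_, ?_, ?_, ?_⟩
  · -- addition
    rintro A B ⟨hA1, hA2⟩ ⟨hB1, hB2⟩
    rw [row_iff] at hA1 hA2 hB1 hB2
    constructor
    · rw [row_iff]; exact row'_add hA1 hB1
    · rw [row_iff, map_add]; exact row'_add hA2 hB2
  · -- scalar multiplication
    rintro c A ⟨hA1, hA2⟩
    rw [row_iff] at hA1 hA2
    constructor
    · rw [row_iff]; exact row'_smul c hA1
    · rw [row_iff, LinearIsometryEquiv.map_smulₛₗ]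
      exact row'_smul _ hA2
  · -- composition
    rintro A B ⟨hA1, hA2⟩ ⟨hB1, hB2⟩
    rw [row_iff] at hA1 hA2 hB1 hB2
    constructor
    · rw [row_iff]; exact row'_comp hd hfud hA1 hB1
    · rw [row_iff, ContinuousLinearMap.adjoint_comp]
      exact row'_comp hd hfud hB2 hA2
  · -- limits
    rintro A As hAs hconv
    have hconv' : Tendsto (fun k => ‖ContinuousLinearMap.adjoint A
        - ContinuousLinearMap.adjoint (As k)‖) atTop (nhds 0) := by
      refine hconv.congr fun k => ?_
      rw [← map_sub]
      exact (LinearIsometryEquiv.norm_map _ _).symm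
    constructor
    · rw [row_iff]
      exact row'_lim (fun k => (row_iff d (As k)).mp (hAs k).1) hconv
    · rw [row_iff]
      exact row'_lim (fun k => (row_iff d _).mp (hAs k).2) hconv'
  · -- adjoint
    rintro A ⟨hA1, hA2⟩
    exact ⟨hA2, by rwa [ContinuousLinearMap.adjoint_adjoint]⟩

end
end
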